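/- Consider a birth-death chain on the nonnegative integers absorbed at 0, with up-probability p₁ = 2λ/(1+3λ) from state 1 and up-probability p = λ/(1+λ) from every state k ≥ 2, where λ > 1. Then the probability of never being absorbed, starting from state 1, equals 2(λ-1)/(3λ-1). -/

import Mathlib

/-- For the birth-death chain on ℕ absorbed at 0 with up-probability `2λ/(1+3λ)` from
state 1 and `λ/(1+λ)` from every state `k ≥ 2` (λ > 1), the survival probability from
state 1 (one minus the absorption probability, the latter characterized as the minimal
nonnegative solution of the harmonic equations with boundary value 1 at 0) equals
`2(λ-1)/(3λ-1)`. -/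
theorem stmt_1 (lam : ℝ) (hlam : 1 < lam)
    (p : ℕ → ℝ) (hp1 : p 1 = 2 * lam / (1 + 3 * lam))
    (hpk : ∀ k, 2 ≤ k → p k = lam / (1 + lam))
    (h : ℕ → ℝ)
    (h0 : h 0 = 1)
    (hrec : ∀ k, 1 ≤ k → h k = p k * h (k + 1) + (1 - p k) * h (k - 1))
    (hnonneg : ∀ k, 0 ≤ h k)
    (hmin : ∀ g : ℕ → ℝ, g 0 = 1 →
      (∀ k, 1 ≤ k → g k = p k * g (k + 1) + (1 - p k) * g (k - 1)) →
      (∀ k, 0 ≤ g k) → ∀ k, h k ≤ g k) :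
    1 - h 1 = 2 * (lam - 1) / (3 * lam - 1) := by
  have hl0 : (0:ℝ) < lam := by linarith
  have hlne : lam ≠ 0 := ne_of_gt hl0
  have h1p : (0:ℝ) < 1 + lam := by linarith
  have h3p : (0:ℝ) < 3 * lam - 1 := by linarith
  have h13 : (0:ℝ) < 1 + 3 * lam := by linarith
  have hlm1 : (0:ℝ) < lam - 1 := by linarith
  have h3ne : (lam * 3 - 1 : ℝ) ≠ 0 := by linarith
  have h13ne : (1 + lam * 3 : ℝ) ≠ 0 := by linarith
  have hlm1ne : (lam - 1 : ℝ) ≠ 0 := ne_of_gt hlm1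
  set c : ℝ := (1 + lam) / (3 * lam - 1) with hc
  have hcpos : 0 < c := div_pos h1p h3p
  -- upper bound via candidate g
  have hub : h 1 ≤ c := by
    set g : ℕ → ℝ := fun k => match k with
      | 0 => 1
      | (m+1) => c / lam ^ m with hg
    have hg0 : g 0 = 1 := rfl
    have hgrec : ∀ k, 1 ≤ k → g k = p k * g (k + 1) + (1 - p k) * g (k - 1) := by
      intro k hk
      match k with
      | 1 =>
        show c / lam ^ 0 = p 1 * (c / lam ^ 1) + (1 - p 1) * 1
        rw [hp1, hc]
        field_simp
        ring
      | (m+2) =>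
        have hpk2 := hpk (m+2) (by omega)
        show c / lam ^ (m+1) = p (m+2) * (c / lam ^ (m+2)) + (1 - p (m+2)) * (c / lam ^ m)
        rw [hpk2]
        have hpow : lam ^ m ≠ 0 := pow_ne_zero _ hlne
        field_simp
        ring
    have hgnn : ∀ k, 0 ≤ g k := by
      intro k
      match k with
      | 0 => norm_num
      | (m+1) =>
        show 0 ≤ c / lam ^ m
        positivity
    have hmg := hmin g hg0 hgrec hgnn 1
    have hg1 : g 1 = c := by show c / lam ^ 0 = c; simp
    rwa [hg1] at hmg
  -- the k = 1 relation
  have e1 : h 1 * (1 + 3 * lam) = 2 * lam * h 2 + (1 + lam) := by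
    have e := hrec 1 le_rfl
    rw [show (1:ℕ) - 1 = 0 from rfl, hp1, h0] at e
    field_simp at e
    linarith
  -- lower bound
  have hlb : c ≤ h 1 := by
    by_contra hlt
    push_neg at hlt
    set A : ℝ := (lam * h 2 - h 1) / (lam - 1) with hA
    set B : ℝ := lam ^ 2 * (h 1 - h 2) / (lam - 1) with hB
    have hAneg : A < 0 := by
      have hcl : h 1 * (3 * lam - 1) < 1 + lam := by
        rw [hc, lt_div_iff₀ h3p] at hlt
        linarith
      have : lam * h 2 - h 1 < 0 := by nlinarith [e1]
      exact div_neg_of_neg_of_pos this hlm1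
    have key : ∀ m : ℕ, h (m + 1) = A + B * (lam⁻¹) ^ (m + 1) ∧
        h (m + 2) = A + B * (lam⁻¹) ^ (m + 2) := by
      intro m
      induction m with
      | zero =>
        constructor
        · rw [hA, hB]; simp only [inv_pow, zero_add]; field_simp; ring
        · rw [hA, hB]; simp only [inv_pow, zero_add]; field_simp; ring
      | succ n ih =>
        refine ⟨ih.2, ?_⟩
        have e := hrec (n + 2) (by omega)
        rw [hpk (n+2) (by omega)] at e
        have hi1 := ih.1
        have hi2 := ih.2
        rw [show n + 2 - 1 = n + 1 from rfl] at e
        -- e : h (n+2) = lam/(1+lam) * h (n+3) + (1 - lam/(1+lam)) * h (n+1)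
        have hsolve : h (n + 2 + 1) = ((1 + lam) * h (n + 2) - h (n + 1)) / lam := by
          field_simp at e
          field_simp
          linarith
        rw [hsolve, hi1, hi2]
        have hpow : lam ^ (n+1) ≠ 0 := pow_ne_zero _ hlne
        simp only [inv_pow]
        field_simp
        ring
    -- contradiction: h eventually negative
    obtain ⟨n, hn⟩ := pow_unbounded_of_one_lt (|B| / (-A)) hlam
    have hln : (0:ℝ) < lam ^ (n+1) := pow_pos hl0 _
    have hlnn : lam ^ n ≤ lam ^ (n+1) := pow_le_pow_right₀ (le_of_lt hlam) (by omega)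
    have hBb : B * (lam⁻¹) ^ (n+1) < -A := by
      have h1' : |B| / (-A) < lam ^ (n+1) := lt_of_lt_of_le hn hlnn
      have h2' : |B| < (-A) * lam ^ (n+1) := by
        rw [div_lt_iff₀ (by linarith)] at h1'
        linarith [h1']
      have : B * (lam⁻¹) ^ (n+1) ≤ |B| * (lam⁻¹) ^ (n+1) := by
        apply mul_le_mul_of_nonneg_right (le_abs_self B)
        positivity
      calc B * (lam⁻¹) ^ (n+1) ≤ |B| * (lam⁻¹) ^ (n+1) := this
        _ < ((-A) * lam ^ (n+1)) * (lam⁻¹) ^ (n+1) := by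
            apply mul_lt_mul_of_pos_right h2'
            positivity
        _ = -A := by
            rw [inv_pow, mul_assoc, mul_inv_cancel₀ (ne_of_gt hln), mul_one]
    have := (key n).1
    have : h (n + 1) < 0 := by rw [this]; linarith
    exact absurd (hnonneg (n+1)) (not_le.mpr this)
  have heq : h 1 = c := le_antisymm hub hlb
  rw [heq, hc]
  field_simp
  ring
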